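/- Let c be a 2-colouring of {2,...,N} and suppose c(2) = R. Let k > 2 be minimal with c(k) = B (assume such k exists and 4·a·k ≤ N for a given odd integer a ≥ 2 with k not dividing 4a and k ≠ 4). Then the set {2, k, 2k, a, 2a, ka, 2ka, 4a, 4ka} ⊆ {2,...,N} contains a monochromatic solution (x, y, z) to x·y = z with a dividing z. -/
import Mathlib

set_option maxHeartbeats 2000000 in
theorem stmt_14 (N k a : ℕ) (c : ℕ → Bool)
    (hc2 : c 2 = true) (hk2 : 2 < k) (hck : c k = false)
    (hmin : ∀ j, 2 ≤ j → j < k → c j = true)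
    (ha : 2 ≤ a) (haodd : Odd a) (hN : 4 * a * k ≤ N)
    (hknd : ¬ k ∣ 4 * a) (hk4 : k ≠ 4) :
    ∃ x ∈ ({2, k, 2*k, a, 2*a, k*a, 2*k*a, 4*a, 4*k*a} : Finset ℕ),
    ∃ y ∈ ({2, k, 2*k, a, 2*a, k*a, 2*k*a, 4*a, 4*k*a} : Finset ℕ),
    ∃ z ∈ ({2, k, 2*k, a, 2*a, k*a, 2*k*a, 4*a, 4*k*a} : Finset ℕ),
      c x = c y ∧ c y = c z ∧ x * y = z ∧ a ∣ z := by
  have m1 : 2 ∈ ({2, k, 2*k, a, 2*a, k*a, 2*k*a, 4*a, 4*k*a} : Finset ℕ) := by simp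
  have m2 : k ∈ ({2, k, 2*k, a, 2*a, k*a, 2*k*a, 4*a, 4*k*a} : Finset ℕ) := by simp
  have m3 : 2*k ∈ ({2, k, 2*k, a, 2*a, k*a, 2*k*a, 4*a, 4*k*a} : Finset ℕ) := by simp
  have m4 : a ∈ ({2, k, 2*k, a, 2*a, k*a, 2*k*a, 4*a, 4*k*a} : Finset ℕ) := by simp
  have m5 : 2*a ∈ ({2, k, 2*k, a, 2*a, k*a, 2*k*a, 4*a, 4*k*a} : Finset ℕ) := by simp
  have m6 : k*a ∈ ({2, k, 2*k, a, 2*a, k*a, 2*k*a, 4*a, 4*k*a} : Finset ℕ) := by simp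
  have m7 : 2*k*a ∈ ({2, k, 2*k, a, 2*a, k*a, 2*k*a, 4*a, 4*k*a} : Finset ℕ) := by simp
  have m8 : 4*a ∈ ({2, k, 2*k, a, 2*a, k*a, 2*k*a, 4*a, 4*k*a} : Finset ℕ) := by simp
  have m9 : 4*k*a ∈ ({2, k, 2*k, a, 2*a, k*a, 2*k*a, 4*a, 4*k*a} : Finset ℕ) := by simp
  cases h2K : c (2*k) <;> cases hA : c a <;> cases h2A : c (2*a) <;>
    cases hKA : c (k*a) <;> cases h2KA : c (2*k*a) <;> cases h4A : c (4*a) <;>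
    cases h4KA : c (4*k*a) <;>
  first
  | exact ⟨2, m1, a, m4, 2*a, m5, hc2.trans hA.symm, hA.trans h2A.symm,
      rfl, ⟨2, by ring⟩⟩
  | exact ⟨2, m1, 2*a, m5, 4*a, m8, hc2.trans h2A.symm, h2A.trans h4A.symm,
      by ring, ⟨4, by ring⟩⟩
  | exact ⟨2, m1, k*a, m6, 2*k*a, m7, hc2.trans hKA.symm, hKA.trans h2KA.symm,
      by ring, ⟨2*k, by ring⟩⟩
  | exact ⟨2, m1, 2*k*a, m7, 4*k*a, m9, hc2.trans h2KA.symm, h2KA.trans h4KA.symm,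
      by ring, ⟨4*k, by ring⟩⟩
  | exact ⟨k, m2, a, m4, k*a, m6, hck.trans hA.symm, hA.trans hKA.symm,
      rfl, ⟨k, by ring⟩⟩
  | exact ⟨k, m2, 2*a, m5, 2*k*a, m7, hck.trans h2A.symm, h2A.trans h2KA.symm,
      by ring, ⟨2*k, by ring⟩⟩
  | exact ⟨k, m2, 4*a, m8, 4*k*a, m9, hck.trans h4A.symm, h4A.trans h4KA.symm,
      by ring, ⟨4*k, by ring⟩⟩
  | exact ⟨2*k, m3, a, m4, 2*k*a, m7, h2K.trans hA.symm, hA.trans h2KA.symm,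
      rfl, ⟨2*k, by ring⟩⟩
  | exact ⟨2*k, m3, 2*a, m5, 4*k*a, m9, h2K.trans h2A.symm, h2A.trans h4KA.symm,
      by ring, ⟨4*k, by ring⟩⟩
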